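/- Let A and B be n×n Manin matrices over an associative unital (possibly noncommutative) ring R such that every entry of A commutes with every entry of B (i.e. [A_{ij}, B_{kl}] = 0 for all i,j,k,l). Then the product AB is a Manin matrix and det^col(AB) = det^col(A)·det^col(B). -/

import Mathlib

open scoped BigOperators

/-- A matrix `M` over a (possibly noncommutative) ring is a *Manin matrix* if
entries of the same column commute and cross-commutators of 2×2 submatrices are equal. -/
def Matrix.IsManin {R : Type*} [Ring R] {n m : ℕ} (M : Matrix (Fin n) (Fin m) R) : Prop :=
  (∀ i k : Fin n, ∀ j : Fin m, M i j * M k j = M k j * M i j) ∧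
  (∀ i k : Fin n, ∀ j l : Fin m,
    M i j * M k l - M k l * M i j = M k j * M i l - M i l * M k j)

/-- Column determinant: factors multiplied in order of increasing column index. -/
noncomputable def Matrix.detCol {R : Type*} [Ring R] {n : ℕ}
    (M : Matrix (Fin n) (Fin n) R) : R :=
  ∑ σ : Equiv.Perm (Fin n),
    (Equiv.Perm.sign σ : ℤ) • ((List.finRange n).map (fun i => M (σ i) i)).prod

/-- Row determinant: factors multiplied in order of increasing row index. -/
noncomputable def Matrix.detRow {R : Type*} [Ring R] {n : ℕ}
    (M : Matrix (Fin n) (Fin n) R) : R :=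
  ∑ σ : Equiv.Perm (Fin n),
    (Equiv.Perm.sign σ : ℤ) • ((List.finRange n).map (fun i => M i (σ i))).prod

/-- Row permanent: factors multiplied in order of increasing row index. -/
noncomputable def Matrix.permRow {R : Type*} [Ring R] {n : ℕ}
    (M : Matrix (Fin n) (Fin n) R) : R :=
  ∑ σ : Equiv.Perm (Fin n), ((List.finRange n).map (fun i => M i (σ i))).prod

section ManinAux

lemma finRange_split {n t : ℕ} (ht : t + 1 < n) :
    List.finRange n = (List.finRange n).take t ++
      (⟨t, by omega⟩ : Fin n) :: (⟨t+1, ht⟩ : Fin n) :: (List.finRange n).drop (t+2) := by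
  conv_lhs => rw [← List.take_append_drop t (List.finRange n)]
  congr 1
  rw [List.drop_eq_getElem_cons (by simp; omega), List.drop_eq_getElem_cons (by simp; omega)]
  simp [List.getElem_finRange, Fin.ext_iff]

lemma not_mem_parts {n t : ℕ} (ht : t + 1 < n) {x : Fin n}
    (hx : x = (⟨t, by omega⟩ : Fin n) ∨ x = (⟨t+1, ht⟩ : Fin n)) :
    x ∉ (List.finRange n).take t ∧ x ∉ (List.finRange n).drop (t+2) := by
  have hnd := List.nodup_finRange n
  rw [finRange_split ht, List.nodup_append] at hnd
  obtain ⟨h1, h2, h3⟩ := hnd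
  rw [List.nodup_cons] at h2
  obtain ⟨ha, h2⟩ := h2
  rw [List.nodup_cons] at h2
  obtain ⟨hb, -⟩ := h2
  rcases hx with rfl | rfl
  · exact ⟨fun hm => h3 _ hm _ (by simp) rfl, fun hm => ha (by simp [hm])⟩
  · exact ⟨fun hm => h3 _ hm _ (by simp) rfl, fun hm => hb hm⟩

lemma prod_split {R : Type*} [Ring R] {n t : ℕ} (ht : t + 1 < n) (h : Fin n → R) :
    ((List.finRange n).map h).prod =
      (((List.finRange n).take t).map h).prod *
        (h ⟨t, by omega⟩ * (h ⟨t+1, ht⟩ * (((List.finRange n).drop (t+2)).map h).prod)) := by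
  conv_lhs => rw [finRange_split ht]
  simp [List.prod_append, mul_assoc]

noncomputable def DD {R : Type*} [Ring R] {n : ℕ} (A : Matrix (Fin n) (Fin n) R)
    (f : Fin n → Fin n) : R :=
  ∑ σ : Equiv.Perm (Fin n),
    (Equiv.Perm.sign σ : ℤ) • ((List.finRange n).map (fun j => A (σ j) (f j))).prod

section DDlemmas
variable {R : Type*} [Ring R] {n : ℕ} (A : Matrix (Fin n) (Fin n) R)

-- Generic vanishing lemma: if the middle commutator-like factor is symmetric under
-- swapping σ with σ * swap a b, the signed sum vanishes.
lemma sum_sign_vanish {a b : Fin n} (hab : a ≠ b) (F : Equiv.Perm (Fin n) → R)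
    (hF : ∀ σ : Equiv.Perm (Fin n), F (σ * Equiv.swap a b) = F σ) :
    ∑ σ : Equiv.Perm (Fin n), (Equiv.Perm.sign σ : ℤ) • F σ = 0 := by
  apply Finset.sum_involution (fun σ _ => σ * Equiv.swap a b)
  · intro σ _
    rw [hF, Equiv.Perm.sign_mul, Equiv.Perm.sign_swap hab]
    simp [add_comm]
  · intro σ _ _ h
    have := congrArg (fun ρ : Equiv.Perm (Fin n) => ρ a) h
    simp only [Equiv.Perm.mul_apply, Equiv.swap_apply_left] at this
    exact hab (σ.injective this).symm
  · intro σ _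
    exact Finset.mem_univ _
  · intro σ _
    rw [mul_assoc, Equiv.swap_mul_self, mul_one]

lemma DD_zero_adj (hA : A.IsManin) (f : Fin n → Fin n) {t : ℕ} (ht : t + 1 < n)
    (hf : f ⟨t, by omega⟩ = f ⟨t+1, ht⟩) : DD A f = 0 := by
  set a : Fin n := ⟨t, by omega⟩ with ha
  set b : Fin n := ⟨t+1, ht⟩ with hb
  have hab : a ≠ b := by simp [ha, hb, Fin.ext_iff]
  unfold DD
  have split : ∀ σ : Equiv.Perm (Fin n),
      ((List.finRange n).map (fun j => A (σ j) (f j))).prod =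
      (((List.finRange n).take t).map (fun j => A (σ j) (f j))).prod *
        (A (σ a) (f a) * (A (σ b) (f b) *
          (((List.finRange n).drop (t+2)).map (fun j => A (σ j) (f j))).prod)) :=
    fun σ => prod_split ht _
  simp only [split]
  apply sum_sign_vanish hab
  intro σ
  have hUV : ∀ x (hx : x ∈ (List.finRange n).take t ∨ x ∈ (List.finRange n).drop (t+2)),
      (σ * Equiv.swap a b) x = σ x := by
    intro x hx
    have hxa : x ≠ a := fun h => by
      rcases hx with h' | h' <;> [exact (not_mem_parts ht (Or.inl h)).1 h';
        exact (not_mem_parts ht (Or.inl h)).2 h']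
    have hxb : x ≠ b := fun h => by
      rcases hx with h' | h' <;> [exact (not_mem_parts ht (Or.inr h)).1 h';
        exact (not_mem_parts ht (Or.inr h)).2 h']
    simp [Equiv.Perm.mul_apply, Equiv.swap_apply_of_ne_of_ne hxa hxb]
  have hU : (((List.finRange n).take t).map (fun j => A ((σ * Equiv.swap a b) j) (f j))).prod
      = (((List.finRange n).take t).map (fun j => A (σ j) (f j))).prod := by
    congr 1; exact List.map_congr_left fun x hx => by rw [hUV x (Or.inl hx)]
  have hV : (((List.finRange n).drop (t+2)).map (fun j => A ((σ * Equiv.swap a b) j) (f j))).prod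
      = (((List.finRange n).drop (t+2)).map (fun j => A (σ j) (f j))).prod := by
    congr 1; exact List.map_congr_left fun x hx => by rw [hUV x (Or.inr hx)]
  have hsa : (σ * Equiv.swap a b) a = σ b := by simp [Equiv.Perm.mul_apply]
  have hsb : (σ * Equiv.swap a b) b = σ a := by simp [Equiv.Perm.mul_apply]
  rw [hU, hV, hsa, hsb, hf]
  have comm := hA.1 (σ b) (σ a) (f b)
  rw [← mul_assoc (A (σ b) (f b)) (A (σ a) (f b)), comm, mul_assoc]

lemma DD_swap_adj (hA : A.IsManin) (f : Fin n → Fin n) {t : ℕ} (ht : t + 1 < n) :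
    DD A (f ∘ Equiv.swap ⟨t, by omega⟩ ⟨t+1, ht⟩) = - DD A f := by
  set a : Fin n := ⟨t, by omega⟩ with hadef
  set b : Fin n := ⟨t+1, ht⟩ with hbdef
  have hab : a ≠ b := by simp [hadef, hbdef, Fin.ext_iff]
  set s := Equiv.swap a b with hs
  set U : Equiv.Perm (Fin n) → R :=
    fun σ => (((List.finRange n).take t).map (fun j => A (σ j) (f j))).prod with hUdef
  set V : Equiv.Perm (Fin n) → R :=
    fun σ => (((List.finRange n).drop (t+2)).map (fun j => A (σ j) (f j))).prod with hVdef
  have hfix : ∀ (σ : Equiv.Perm (Fin n)) x,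
      (x ∈ (List.finRange n).take t ∨ x ∈ (List.finRange n).drop (t+2)) →
      (σ * s) x = σ x ∧ s x = x := by
    intro σ x hx
    have hxa : x ≠ a := fun h => by
      rcases hx with h' | h' <;> [exact (not_mem_parts ht (Or.inl h)).1 h';
        exact (not_mem_parts ht (Or.inl h)).2 h']
    have hxb : x ≠ b := fun h => by
      rcases hx with h' | h' <;> [exact (not_mem_parts ht (Or.inr h)).1 h';
        exact (not_mem_parts ht (Or.inr h)).2 h']
    constructor
    · simp [hs, Equiv.Perm.mul_apply, Equiv.swap_apply_of_ne_of_ne hxa hxb]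
    · simp [hs, Equiv.swap_apply_of_ne_of_ne hxa hxb]
  have hUinv : ∀ σ : Equiv.Perm (Fin n), U (σ * s) = U σ := by
    intro σ
    simp only [hUdef]
    congr 1
    exact List.map_congr_left fun x hx => by rw [(hfix σ x (Or.inl hx)).1]
  have hVinv : ∀ σ : Equiv.Perm (Fin n), V (σ * s) = V σ := by
    intro σ
    simp only [hVdef]
    congr 1
    exact List.map_congr_left fun x hx => by rw [(hfix σ x (Or.inr hx)).1]
  have hsa : s a = b := Equiv.swap_apply_left a b
  have hsb : s b = a := Equiv.swap_apply_right a b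
  have h1 : DD A (f ∘ s) = ∑ σ : Equiv.Perm (Fin n),
      -((Equiv.Perm.sign σ : ℤ) • (U σ * (A (σ b) (f b) * (A (σ a) (f a) * V σ)))) := by
    unfold DD
    rw [← Equiv.sum_comp (Equiv.mulRight s) (fun σ : Equiv.Perm (Fin n) =>
      (Equiv.Perm.sign σ : ℤ) • ((List.finRange n).map (fun j => A (σ j) ((f ∘ s) j))).prod)]
    apply Finset.sum_congr rfl
    intro σ _
    simp only [Equiv.coe_mulRight, Function.comp]
    rw [prod_split ht (fun j => A ((σ * s) j) (f (s j)))]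
    have e1 : (((List.finRange n).take t).map (fun j => A ((σ * s) j) (f (s j)))).prod = U σ := by
      simp only [hUdef]
      congr 1
      exact List.map_congr_left fun x hx =>
        by rw [(hfix σ x (Or.inl hx)).1, (hfix σ x (Or.inl hx)).2]
    have e2 : (((List.finRange n).drop (t+2)).map (fun j => A ((σ * s) j) (f (s j)))).prod
        = V σ := by
      simp only [hVdef]
      congr 1
      exact List.map_congr_left fun x hx =>
        by rw [(hfix σ x (Or.inr hx)).1, (hfix σ x (Or.inr hx)).2]
    have e3 : (σ * s) a = σ b := by rw [Equiv.Perm.mul_apply, hsa]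
    have e4 : (σ * s) b = σ a := by rw [Equiv.Perm.mul_apply, hsb]
    rw [e1, e2, e3, e4, hsa, hsb]
    rw [Equiv.Perm.sign_mul, Equiv.Perm.sign_swap hab]
    simp [neg_smul]
  have h2 : DD A f = ∑ σ : Equiv.Perm (Fin n),
      (Equiv.Perm.sign σ : ℤ) • (U σ * (A (σ a) (f a) * (A (σ b) (f b) * V σ))) := by
    unfold DD
    apply Finset.sum_congr rfl
    intro σ _
    rw [prod_split ht (fun j => A (σ j) (f j))]
  rw [h1, h2]
  apply eq_neg_of_add_eq_zero_left
  rw [← Finset.sum_add_distrib]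
  have step : ∀ σ : Equiv.Perm (Fin n),
      -((Equiv.Perm.sign σ : ℤ) • (U σ * (A (σ b) (f b) * (A (σ a) (f a) * V σ)))) +
        (Equiv.Perm.sign σ : ℤ) • (U σ * (A (σ a) (f a) * (A (σ b) (f b) * V σ))) =
      (Equiv.Perm.sign σ : ℤ) • (U σ *
        ((A (σ a) (f a) * A (σ b) (f b) - A (σ b) (f b) * A (σ a) (f a)) * V σ)) := by
    intro σ
    rw [neg_add_eq_sub, ← smul_sub]
    congr 1
    noncomm_ring
  rw [Finset.sum_congr rfl (fun σ _ => step σ)]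
  apply sum_sign_vanish hab
  intro σ
  rw [hUinv, hVinv]
  congr 2
  · rw [Equiv.Perm.mul_apply, Equiv.Perm.mul_apply, hsa, hsb]
    exact (hA.2 (σ a) (σ b) (f a) (f b)).symm

lemma DD_swap_adj' (hA : A.IsManin) (f : Fin n → Fin n) {x y : Fin n}
    (h : y.val = x.val + 1) : DD A (f ∘ Equiv.swap x y) = - DD A f := by
  have ht : x.val + 1 < n := h ▸ y.isLt
  have hsw : Equiv.swap x y = Equiv.swap (⟨x.val, by omega⟩ : Fin n) ⟨x.val + 1, ht⟩ :=
    congrArg₂ Equiv.swap (Fin.ext rfl) (Fin.ext h)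
  rw [hsw]
  exact DD_swap_adj A hA f ht

lemma DD_swap_gap (hA : A.IsManin) :
    ∀ (d : ℕ) (f : Fin n → Fin n) (x y : Fin n), y.val = x.val + d + 1 →
      DD A (f ∘ Equiv.swap x y) = - DD A f := by
  intro d
  induction d with
  | zero => intro f x y h; exact DD_swap_adj' A hA f h
  | succ d ih =>
    intro f x y h
    have hcn : x.val + d + 1 < n := by have := y.isLt; omega
    set c : Fin n := ⟨x.val + d + 1, hcn⟩ with hcdef
    have hxc : x ≠ c := by simp [hcdef, Fin.ext_iff]; omega
    have hxy : x ≠ y := by simp [Fin.ext_iff]; omega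
    have hcy : c ≠ y := by simp [hcdef, Fin.ext_iff]; omega
    have key : Equiv.swap x y = Equiv.swap c y * Equiv.swap x c * Equiv.swap c y := by
      have h1 := Equiv.swap_apply_apply (Equiv.swap c y) x c
      rw [Equiv.swap_apply_of_ne_of_ne hxc hxy, Equiv.swap_apply_left] at h1
      rw [h1]
      congr 1
    have hcomp : f ∘ ⇑(Equiv.swap x y) =
        (((f ∘ ⇑(Equiv.swap c y)) ∘ ⇑(Equiv.swap x c)) ∘ ⇑(Equiv.swap c y)) := by
      rw [key]; rfl
    rw [hcomp]
    rw [DD_swap_adj' A hA _ (show y.val = c.val + 1 by simp only [hcdef]; omega)]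
    rw [ih (f ∘ ⇑(Equiv.swap c y)) x c rfl]
    rw [DD_swap_adj' A hA f (show y.val = c.val + 1 by simp only [hcdef]; omega)]
    simp

lemma DD_swap_ne (hA : A.IsManin) (f : Fin n → Fin n) {x y : Fin n} (hxy : x ≠ y) :
    DD A (f ∘ Equiv.swap x y) = - DD A f := by
  rcases lt_trichotomy x.val y.val with h | h | h
  · exact DD_swap_gap A hA (y.val - x.val - 1) f x y (by omega)
  · exact absurd (Fin.ext h) hxy
  · rw [Equiv.swap_comm]
    exact DD_swap_gap A hA (x.val - y.val - 1) f y x (by omega)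

lemma DD_perm (hA : A.IsManin) (τ : Equiv.Perm (Fin n)) :
    ∀ f : Fin n → Fin n, DD A (f ∘ ⇑τ) = (Equiv.Perm.sign τ : ℤ) • DD A f := by
  refine Equiv.Perm.swap_induction_on τ ?_ ?_
  · intro f; simp
  · intro π x y hxy ih f
    have hcomp : f ∘ ⇑(Equiv.swap x y * π) = (f ∘ ⇑(Equiv.swap x y)) ∘ ⇑π := rfl
    rw [hcomp, ih, DD_swap_ne A hA f hxy, Equiv.Perm.sign_mul, Equiv.Perm.sign_swap hxy]
    simp

lemma DD_noninj (hA : A.IsManin) (f : Fin n → Fin n) (hf : ¬ Function.Injective f) :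
    DD A f = 0 := by
  rw [Function.not_injective_iff] at hf
  obtain ⟨x, y, hfxy, hxy⟩ := hf
  have h2 : 1 + 1 ≤ n := by
    have hx := x.isLt; have hy := y.isLt
    have : x.val ≠ y.val := fun h => hxy (Fin.ext h)
    omega
  set a : Fin n := ⟨0, by omega⟩ with hadef
  set b : Fin n := ⟨1, h2⟩ with hbdef
  have hab : a ≠ b := by simp [hadef, hbdef, Fin.ext_iff]
  set y' : Fin n := Equiv.swap a x y with hy'def
  have hay' : a ≠ y' := by
    intro h
    have : y = x := by
      have := congrArg (Equiv.swap a x) h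
      rw [Equiv.swap_apply_left, hy'def, Equiv.swap_apply_self] at this
      exact this.symm
    exact hxy this.symm
  set τ : Equiv.Perm (Fin n) := Equiv.swap a x * Equiv.swap b y' with hτdef
  have hτa : τ a = x := by
    rw [hτdef, Equiv.Perm.mul_apply, Equiv.swap_apply_of_ne_of_ne hab hay',
      Equiv.swap_apply_left]
  have hτb : τ b = y := by
    rw [hτdef, Equiv.Perm.mul_apply, Equiv.swap_apply_left, hy'def,
      Equiv.swap_apply_self]
  have hzero : DD A (f ∘ ⇑τ) = 0 := by
    apply DD_zero_adj A hA (f ∘ ⇑τ) (t := 0) h2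
    show f (τ ⟨0, _⟩) = f (τ ⟨0+1, _⟩)
    rw [show (⟨0, by omega⟩ : Fin n) = a from rfl, show (⟨0+1, h2⟩ : Fin n) = b from rfl,
      hτa, hτb, hfxy]
  rw [DD_perm A hA τ f] at hzero
  rcases Int.units_eq_one_or (Equiv.Perm.sign τ) with h | h <;> rw [h] at hzero <;>
    simpa using hzero

lemma list_prod_sum {R : Type*} [Ring R] {α : Type*} [Fintype α] :
    ∀ (n : ℕ) (g : Fin n → α → R),
      ((List.finRange n).map (fun j => ∑ a : α, g j a)).prod =
        ∑ f : Fin n → α, ((List.finRange n).map (fun j => g j (f j))).prod := by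
  intro n
  induction n with
  | zero => intro g; simp
  | succ m ih =>
    intro g
    have rhs : (∑ f : Fin (m+1) → α, ((List.finRange (m+1)).map (fun j => g j (f j))).prod)
        = ∑ a : α, ∑ f : Fin m → α,
            g 0 a * ((List.finRange m).map (fun j => g j.succ (f j))).prod := by
      rw [← Equiv.sum_comp (Fin.consEquiv (fun _ : Fin (m+1) => α))
        (fun f : Fin (m+1) → α => ((List.finRange (m+1)).map (fun j => g j (f j))).prod)]
      rw [Fintype.sum_prod_type]
      refine Finset.sum_congr rfl fun a _ => Finset.sum_congr rfl fun f _ => ?_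
      simp only [List.finRange_succ, List.map_cons, List.prod_cons, List.map_map,
        Fin.consEquiv_apply, Fin.cons_zero]
      congr 1
    rw [rhs, List.finRange_succ, List.map_cons, List.prod_cons, List.map_map]
    rw [show ((fun j => ∑ a : α, g j a) ∘ Fin.succ) = fun j => ∑ a : α, g (Fin.succ j) a
      from rfl]
    rw [ih (fun j a => g (Fin.succ j) a), Finset.sum_mul_sum]

lemma list_prod_mul {R : Type*} [Ring R] {ι : Type*} (l : List ι) (u v : ι → R)
    (h : ∀ j k, Commute (v j) (u k)) :
    (l.map (fun j => u j * v j)).prod = (l.map u).prod * (l.map v).prod := by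
  induction l with
  | nil => simp
  | cons x l ih =>
    simp only [List.map_cons, List.prod_cons, ih]
    have hc : Commute (v x) ((l.map u).prod) :=
      Commute.list_prod_right _ _ (by
        intro z hz
        obtain ⟨k, _, rfl⟩ := List.mem_map.1 hz
        exact h x k)
    have h1 : v x * ((l.map u).prod * (l.map v).prod)
        = (l.map u).prod * (v x * (l.map v).prod) := by
      rw [← mul_assoc, hc.eq, mul_assoc]
    rw [mul_assoc, h1, ← mul_assoc]

lemma pairing_zero {R : Type*} [Ring R] {n : ℕ} (C S : Fin n → Fin n → R)
    (hsym : ∀ a b, C a b + C b a = 0) (hdiag : ∀ a, C a a = 0)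
    (hS : ∀ a b, S a b = S b a) :
    ∑ a : Fin n, ∑ b : Fin n, C a b * S a b = 0 := by
  rw [← Finset.sum_product']
  apply Finset.sum_involution (fun p _ => (p.2, p.1))
  · intro p _
    show C p.1 p.2 * S p.1 p.2 + C p.2 p.1 * S p.2 p.1 = 0
    rw [hS p.2 p.1, ← add_mul, hsym, zero_mul]
  · intro p _ hp h
    apply hp
    have h2 : p.2 = p.1 := congrArg Prod.fst h
    show C p.1 p.2 * S p.1 p.2 = 0
    rw [h2, hdiag, zero_mul]
  · intro p _; exact Finset.mem_univ _
  · intro p _; rfl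

end DDlemmas

end ManinAux

/-- if `A` and `B` are Manin matrices whose entries mutually commute,
then `A * B` is a Manin matrix and `detCol (A * B) = detCol A * detCol B`. -/
theorem isManin_mul {R : Type*} [Ring R] {n : ℕ}
    (A B : Matrix (Fin n) (Fin n) R) (hA : A.IsManin) (hB : B.IsManin)
    (hAB : ∀ i k j l : Fin n, A i j * B k l = B k l * A i j) :
    (A * B).IsManin ∧ (A * B).detCol = A.detCol * B.detCol := by
  have key : ∀ p q r s : Fin n, (A * B) p q * (A * B) r s =
      ∑ a : Fin n, ∑ b : Fin n, A p a * A r b * (B a q * B b s) := by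
    intro p q r s
    rw [Matrix.mul_apply, Matrix.mul_apply, Finset.sum_mul_sum]
    refine Finset.sum_congr rfl fun a _ => Finset.sum_congr rfl fun b _ => ?_
    rw [mul_assoc (A p a) (B a q), ← mul_assoc (B a q) (A r b), ← hAB r a b q,
      mul_assoc (A r b) (B a q), ← mul_assoc]
  constructor
  · constructor
    · intro i k j
      rw [← sub_eq_zero, key i j k j,
        show (A * B) k j * (A * B) i j =
            ∑ a : Fin n, ∑ b : Fin n, A k b * A i a * (B b j * B a j)
          from (key k j i j).trans Finset.sum_comm]
      simp only [← Finset.sum_sub_distrib]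
      rw [show (∑ a : Fin n, ∑ b : Fin n,
            (A i a * A k b * (B a j * B b j) - A k b * A i a * (B b j * B a j))) =
          ∑ a : Fin n, ∑ b : Fin n,
            (A i a * A k b - A k b * A i a) * (B a j * B b j)
        from Finset.sum_congr rfl fun a _ => Finset.sum_congr rfl fun b _ => by
          rw [hB.1 b a j, ← sub_mul]]
      apply pairing_zero
      · intro a b
        have h2 : A i a * A k b - A k b * A i a + (A i b * A k a - A k a * A i b) =
            (A i a * A k b - A k b * A i a) - (A k a * A i b - A i b * A k a) := by abel
        rw [h2, hA.2 i k a b, sub_self]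
      · intro a
        rw [hA.1 i k a, sub_self]
      · intro a b
        rw [hB.1 a b j]
    · intro i k j l
      rw [← sub_eq_zero, key i j k l, key k j i l,
        show (A * B) k l * (A * B) i j =
            ∑ a : Fin n, ∑ b : Fin n, A k b * A i a * (B b l * B a j)
          from (key k l i j).trans Finset.sum_comm,
        show (A * B) i l * (A * B) k j =
            ∑ a : Fin n, ∑ b : Fin n, A i b * A k a * (B b l * B a j)
          from (key i l k j).trans Finset.sum_comm]
      simp only [← Finset.sum_sub_distrib]
      rw [show (∑ a : Fin n, ∑ b : Fin n,
            (A i a * A k b * (B a j * B b l) - A k b * A i a * (B b l * B a j) -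
              (A k a * A i b * (B a j * B b l) - A i b * A k a * (B b l * B a j)))) =
          ∑ a : Fin n, ∑ b : Fin n,
            (A k b * A i a - A i b * A k a) * (B a j * B b l - B b l * B a j)
        from Finset.sum_congr rfl fun a _ => Finset.sum_congr rfl fun b _ => by
          have hbr : A i a * A k b - A k b * A i a -
              (A k a * A i b - A i b * A k a) = 0 := by
            rw [hA.2 i k a b, sub_self]
          have expand : A i a * A k b * (B a j * B b l) -
                A k b * A i a * (B b l * B a j) -
              (A k a * A i b * (B a j * B b l) - A i b * A k a * (B b l * B a j)) =
              (A i a * A k b - A k b * A i a - (A k a * A i b - A i b * A k a)) *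
                  (B a j * B b l) +
                (A k b * A i a - A i b * A k a) * (B a j * B b l - B b l * B a j) := by
            noncomm_ring
          rw [expand, hbr, zero_mul, zero_add]]
      apply pairing_zero
      · intro a b
        have h2 : A k b * A i a - A i b * A k a + (A k a * A i b - A i a * A k b) =
            (A k b * A i a - A i a * A k b) - (A i b * A k a - A k a * A i b) := by abel
        rw [h2, hA.2 k i b a, sub_self]
      · intro a
        rw [hA.1 k i a, sub_self]
      · intro a b
        exact hB.2 a b j l
  · have expand : (A * B).detCol = ∑ f : Fin n → Fin n,
        DD A f * ((List.finRange n).map (fun j => B (f j) j)).prod := by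
      unfold Matrix.detCol
      have e1 : ∀ σ : Equiv.Perm (Fin n),
          ((List.finRange n).map (fun j => (A * B) (σ j) j)).prod =
          ∑ f : Fin n → Fin n,
            ((List.finRange n).map (fun j => A (σ j) (f j))).prod *
              ((List.finRange n).map (fun j => B (f j) j)).prod := by
        intro σ
        have e0 : ((List.finRange n).map (fun j => (A * B) (σ j) j)).prod
            = ((List.finRange n).map (fun j => ∑ a : Fin n, A (σ j) a * B a j)).prod := by
          refine congrArg List.prod (List.map_congr_left fun x _ => ?_)
          rw [Matrix.mul_apply]
        rw [e0, list_prod_sum n (fun j a => A (σ j) a * B a j)]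
        refine Finset.sum_congr rfl fun f _ => ?_
        exact list_prod_mul (List.finRange n) (fun j => A (σ j) (f j))
          (fun j => B (f j) j) (fun j k => by simpa [Commute, SemiconjBy] using (hAB (σ k) (f j) (f k) j).symm)
      calc (∑ σ : Equiv.Perm (Fin n), (Equiv.Perm.sign σ : ℤ) •
              ((List.finRange n).map (fun j => (A * B) (σ j) j)).prod)
          = ∑ σ : Equiv.Perm (Fin n), ∑ f : Fin n → Fin n,
              (Equiv.Perm.sign σ : ℤ) •
                (((List.finRange n).map (fun j => A (σ j) (f j))).prod *
                  ((List.finRange n).map (fun j => B (f j) j)).prod) := by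
            refine Finset.sum_congr rfl fun σ _ => ?_
            rw [e1 σ, Finset.smul_sum]
        _ = ∑ f : Fin n → Fin n, ∑ σ : Equiv.Perm (Fin n),
              (Equiv.Perm.sign σ : ℤ) •
                (((List.finRange n).map (fun j => A (σ j) (f j))).prod *
                  ((List.finRange n).map (fun j => B (f j) j)).prod) := Finset.sum_comm
        _ = ∑ f : Fin n → Fin n,
              DD A f * ((List.finRange n).map (fun j => B (f j) j)).prod := by
            refine Finset.sum_congr rfl fun f _ => ?_
            unfold DD
            rw [Finset.sum_mul]
            refine Finset.sum_congr rfl fun σ _ => ?_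
            rw [smul_mul_assoc]
    rw [expand]
    rw [← Finset.sum_filter_add_sum_filter_not Finset.univ (fun f => Function.Bijective f)]
    have h0 : (∑ f ∈ Finset.univ.filter (fun f : Fin n → Fin n => ¬ Function.Bijective f),
        DD A f * ((List.finRange n).map (fun j => B (f j) j)).prod) = 0 := by
      refine Finset.sum_eq_zero fun f hf => ?_
      have hnb := (Finset.mem_filter.1 hf).2
      have hni : ¬ Function.Injective f := fun hinj => hnb (Finite.injective_iff_bijective.1 hinj)
      rw [DD_noninj A hA f hni, zero_mul]
    rw [h0, add_zero]
    have hbij : (∑ f ∈ Finset.univ.filter (fun f : Fin n → Fin n => Function.Bijective f),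
          DD A f * ((List.finRange n).map (fun j => B (f j) j)).prod) =
        ∑ τ : Equiv.Perm (Fin n),
          DD A ⇑τ * ((List.finRange n).map (fun j => B (τ j) j)).prod := by
      refine Finset.sum_bij'
        (fun f hf => Equiv.ofBijective f (Finset.mem_filter.1 hf).2)
        (fun τ _ => ⇑τ) (fun f hf => Finset.mem_univ _)
        (fun τ _ => Finset.mem_filter.2 ⟨Finset.mem_univ _, τ.bijective⟩)
        (fun f hf => rfl) (fun τ _ => Equiv.ext fun x => rfl) (fun f hf => rfl)
    rw [hbij]
    have hDD : ∀ τ : Equiv.Perm (Fin n), DD A ⇑τ = (Equiv.Perm.sign τ : ℤ) • A.detCol := by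
      intro τ
      have := DD_perm A hA τ id
      rw [Function.id_comp] at this
      rw [this]
      rfl
    calc (∑ τ : Equiv.Perm (Fin n),
            DD A ⇑τ * ((List.finRange n).map (fun j => B (τ j) j)).prod)
        = ∑ τ : Equiv.Perm (Fin n),
            A.detCol * ((Equiv.Perm.sign τ : ℤ) •
              ((List.finRange n).map (fun j => B (τ j) j)).prod) := by
          refine Finset.sum_congr rfl fun τ _ => ?_
          rw [hDD τ, smul_mul_assoc, ← mul_smul_comm]
      _ = A.detCol * B.detCol := by
          rw [← Finset.mul_sum]
          rfl
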